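/- arXiv:cs/0601036 — 4 statements merged into one kernel-verified Lean document; each statement's English description precedes it below -/
import Mathlib

section
/- Let m ≥ 1 and let D = {−1,+1}^m be the set of all words of length m over the alphabet {−1,+1} (i.e., all patterns of length m with no zero entries). Then cap(D) = (m−1)/m. -/
/-- The integer value of a binary symbol. -/
def boolToInt (b : Bool) : ℤ := if b then 1 else 0

/-- Componentwise difference of two binary words, a word over `{-1, 0, +1}`. -/
def diffWord (u v : List Bool) : List ℤ :=
  List.zipWith (fun a b => boolToInt a - boolToInt b) u v

/-- A forbidden pattern: a nonempty finite word over the alphabet `{-1, 0, +1}`. -/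
def IsPattern (p : List ℤ) : Prop :=
  p ≠ [] ∧ ∀ x ∈ p, x = -1 ∨ x = 0 ∨ x = 1

/-- A code `C` of binary words avoids the forbidden set `D` if no difference of two
distinct code words contains a pattern of `D` as a contiguous subword (factor). -/
def AvoidsCode (D : Finset (List ℤ)) (C : Finset (List Bool)) : Prop :=
  ∀ u ∈ C, ∀ v ∈ C, u ≠ v → ∀ p ∈ D, ¬ p <:+: diffWord u v

/-- `delta D n` : the maximal cardinality of a code of binary words of length `n`
avoiding the forbidden set `D`. -/
noncomputable def delta (D : Finset (List ℤ)) (n : ℕ) : ℕ :=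
  sSup {k : ℕ | ∃ C : Finset (List Bool),
    (∀ u ∈ C, u.length = n) ∧ AvoidsCode D C ∧ C.card = k}

/-- The capacity of a set of forbidden difference patterns. -/
noncomputable def cap (D : Finset (List ℤ)) : ℝ :=
  Filter.limsup (fun n : ℕ => Real.logb 2 (delta D n) / n) Filter.atTop

/-! ### Auxiliary counting lemmas -/

lemma my_card_fin_filter (n : ℕ) (p : ℕ → Prop) [DecidablePred p] :
    (Finset.univ.filter (fun i : Fin n => p i)).card = ((Finset.range n).filter p).card := by
  rw [← Finset.card_image_of_injective _ Fin.val_injective]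
  congr 1
  ext a
  simp only [Finset.mem_image, Finset.mem_filter, Finset.mem_univ, true_and, Finset.mem_range]
  constructor
  · rintro ⟨i, hp, rfl⟩; exact ⟨i.isLt, hp⟩
  · rintro ⟨ha, hp⟩; exact ⟨⟨a, ha⟩, hp, rfl⟩

lemma my_card_prescribed (n : ℕ) (T : Finset (Fin n)) :
    (Finset.univ.filter (fun f : Fin n → Bool => ∀ i ∈ T, f i = false)).card
      = 2 ^ (n - T.card) := by
  have h : Finset.univ.filter (fun f : Fin n → Bool => ∀ i ∈ T, f i = false)
      = Fintype.piFinset (fun i => if i ∈ T then ({false} : Finset Bool) else Finset.univ) := by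
    ext f
    simp only [Finset.mem_filter, Finset.mem_univ, true_and, Fintype.mem_piFinset]
    constructor
    · intro hf i
      by_cases hi : i ∈ T
      · simp [hi, hf i hi]
      · simp [hi]
    · intro hf i hi
      have := hf i; simp [hi] at this; exact this
  rw [h, Fintype.card_piFinset]
  have h2 : ∀ i : Fin n, (if i ∈ T then ({false} : Finset Bool) else Finset.univ).card
      = if i ∈ T then 1 else 2 := by
    intro i; by_cases hi : i ∈ T <;> simp [hi]
  simp_rw [h2]
  rw [Finset.prod_ite, Finset.prod_const, Finset.prod_const, one_pow, one_mul]
  congr 1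
  rw [Finset.filter_not, Finset.card_sdiff_of_subset (Finset.filter_subset _ _)]
  simp [Finset.filter_mem_eq_inter]

lemma my_dvd_succ_iff (m n : ℕ) (hm : 1 ≤ m) : m ∣ (n + 1) ↔ n % m = m - 1 := by
  constructor
  · rintro ⟨k, hk⟩
    rcases k with _ | k
    · omega
    · have hn : n = m * k + (m - 1) := by
        have : m * (k + 1) = m * k + m := by ring
        omega
      rw [hn, Nat.mul_add_mod]
      exact Nat.mod_eq_of_lt (by omega)
  · intro h
    refine ⟨n / m + 1, ?_⟩
    have h1 : m * (n / m) + n % m = n := Nat.div_add_mod n m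
    have : m * (n / m + 1) = m * (n / m) + m := by ring
    omega

lemma my_count_res (m : ℕ) (hm : 1 ≤ m) (n : ℕ) :
    ((Finset.range n).filter (fun i => i % m = m - 1)).card = n / m := by
  induction n with
  | zero => simp
  | succ n ih =>
    rw [Finset.range_add_one, Finset.filter_insert, Nat.succ_div]
    by_cases h : m ∣ (n + 1)
    · rw [if_pos ((my_dvd_succ_iff m n hm).mp h), if_pos h,
        Finset.card_insert_of_notMem (by simp), ih]
    · rw [if_neg (fun hc => h ((my_dvd_succ_iff m n hm).mpr hc)), if_neg h, ih, Nat.add_zero]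

lemma my_count_mult (m : ℕ) (hm : 1 ≤ m) (K n : ℕ) (hK : m * K ≤ n) :
    ((Finset.range n).filter (fun i => i % m = 0 ∧ i < m * K)).card = K := by
  have himg : (Finset.range K).image (fun b => m * b)
      = (Finset.range n).filter (fun i => i % m = 0 ∧ i < m * K) := by
    ext a
    simp only [Finset.mem_image, Finset.mem_filter, Finset.mem_range]
    constructor
    · rintro ⟨b, hb, rfl⟩
      have h1 : m * b < m * K := (Nat.mul_lt_mul_left (by omega : 0 < m)).mpr hb
      exact ⟨by omega, Nat.mul_mod_right m b, h1⟩
    · rintro ⟨ha, h0, hlt⟩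
      obtain ⟨b, rfl⟩ := Nat.dvd_of_mod_eq_zero h0
      exact ⟨b, Nat.lt_of_mul_lt_mul_left hlt, rfl⟩
  rw [← himg, Finset.card_image_of_injective _ (fun a b h => by
    simpa using Nat.eq_of_mul_eq_mul_left (by omega) h), Finset.card_range]

/-! ### Lower bound -/

lemma my_lower_bound (m : ℕ) (hm : 1 ≤ m) (D : Finset (List ℤ))
    (hD : ∀ p : List ℤ, p ∈ D ↔ (p.length = m ∧ ∀ x ∈ p, x = -1 ∨ x = 1)) (n : ℕ) :
    ∃ C : Finset (List Bool), (∀ u ∈ C, u.length = n) ∧ AvoidsCode D C ∧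
      C.card = 2 ^ (n - n / m) := by
  classical
  set T : Finset (Fin n) := Finset.univ.filter (fun i : Fin n => (i : ℕ) % m = m - 1) with hT
  refine ⟨(Finset.univ.filter (fun f : Fin n → Bool => ∀ i ∈ T, f i = false)).image List.ofFn,
    ?_, ?_, ?_⟩
  · intro u hu
    simp only [Finset.mem_image] at hu
    obtain ⟨f, _, rfl⟩ := hu
    simp
  · intro u hu v hv huv p hp hinf
    simp only [Finset.mem_image, Finset.mem_filter, Finset.mem_univ, true_and] at hu hv
    obtain ⟨f, hf, rfl⟩ := hu
    obtain ⟨g, hg, rfl⟩ := hv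
    obtain ⟨hplen, hpval⟩ := (hD p).mp hp
    obtain ⟨s, t, hst⟩ := hinf
    have hdlen : (diffWord (List.ofFn f) (List.ofFn g)).length = n := by
      simp [diffWord]
    have hslen : s.length + p.length + t.length = n := by
      rw [← hdlen, ← hst]; simp [List.length_append]; omega
    have hrm : s.length % m < m := Nat.mod_lt _ (by omega)
    have hoff : m - 1 - s.length % m < m := by omega
    have hjn : s.length + (m - 1 - s.length % m) < n := by omega
    have hjm : (s.length + (m - 1 - s.length % m)) % m = m - 1 := by
      have hq : m * (s.length / m) + s.length % m = s.length := Nat.div_add_mod _ _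
      have he : s.length + (m - 1 - s.length % m) = m * (s.length / m) + (m - 1) := by omega
      rw [he, Nat.mul_add_mod]
      exact Nat.mod_eq_of_lt (by omega)
    have hjd : s.length + (m - 1 - s.length % m)
        < (diffWord (List.ofFn f) (List.ofFn g)).length := by
      omega
    have hoffp : m - 1 - s.length % m < p.length := by omega
    have hvp : (diffWord (List.ofFn f) (List.ofFn g))[s.length + (m - 1 - s.length % m)]'hjd
        = p[m - 1 - s.length % m]'hoffp := by
      rw [List.getElem_of_eq hst.symm hjd,
        List.getElem_append_left (by simp only [List.length_append]; omega),
        List.getElem_append_right (by omega)]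
      congr 1
      omega
    have hv0 : (diffWord (List.ofFn f) (List.ofFn g))[s.length + (m - 1 - s.length % m)]'hjd
        = 0 := by
      simp only [diffWord, List.getElem_zipWith, List.getElem_ofFn]
      have h1 : f ⟨s.length + (m - 1 - s.length % m), hjn⟩ = false := by
        apply hf
        simp [hT, hjm]
      have h2 : g ⟨s.length + (m - 1 - s.length % m), hjn⟩ = false := by
        apply hg
        simp [hT, hjm]
      rw [h1, h2]
      simp [boolToInt]
    have := hpval _ (List.getElem_mem hoffp)
    rw [← hvp, hv0] at this
    omega
  · rw [Finset.card_image_of_injective _ List.ofFn_injective, my_card_prescribed]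
    congr 1
    rw [hT, my_card_fin_filter n (fun a => a % m = m - 1), my_count_res m hm n]

/-! ### Upper bound -/

lemma my_entries_pm (u v : List Bool) (n s m : ℕ) (hu' : u.length = n) (hv' : v.length = n)
    (hsn : s + m ≤ n)
    (hblock : ∀ k, k < m → u.getD (s + k) false ≠ v.getD (s + k) false) :
    ∀ x ∈ ((diffWord u v).drop s).take m, x = -1 ∨ x = 1 := by
  have hdlen : (diffWord u v).length = n := by simp [diffWord, hu', hv']
  intro x hx
  rw [List.mem_iff_getElem] at hx
  obtain ⟨k, hk, hkx⟩ := hx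
  have hk' : k < m := by simp [hdlen] at hk; omega
  have hun : s + k < u.length := by omega
  have hvn : s + k < v.length := by omega
  have hget : (((diffWord u v).drop s).take m)[k]'hk
      = boolToInt (u[s + k]'hun) - boolToInt (v[s + k]'hvn) := by
    rw [List.getElem_take, List.getElem_drop]
    simp [diffWord, List.getElem_zipWith]
  have hdk := hblock k hk'
  rw [List.getD_eq_getElem _ _ hun, List.getD_eq_getElem _ _ hvn] at hdk
  rw [← hkx, hget]
  rcases Bool.eq_false_or_eq_true (u[s + k]'hun) with h1 | h1 <;>
    rcases Bool.eq_false_or_eq_true (v[s + k]'hvn) with h2 | h2 <;>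
      rw [h1, h2] at hdk ⊢ <;> simp [boolToInt] at hdk ⊢

lemma my_take_drop_infix {α : Type*} (l : List α) (s m : ℕ) :
    ((l.drop s).take m) <:+: l := by
  refine ⟨l.take s, l.drop (s + m), ?_⟩
  rw [List.append_assoc]
  have h1 : l.drop (s + m) = (l.drop s).drop m := by
    rw [List.drop_drop, Nat.add_comm]
  rw [h1, List.take_append_drop, List.take_append_drop]

lemma my_upper_bound (m : ℕ) (hm : 1 ≤ m) (D : Finset (List ℤ))
    (hD : ∀ p : List ℤ, p ∈ D ↔ (p.length = m ∧ ∀ x ∈ p, x = -1 ∨ x = 1)) (n : ℕ)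
    (C : Finset (List Bool)) (hlen : ∀ u ∈ C, u.length = n) (hav : AvoidsCode D C) :
    C.card ≤ 2 ^ (n - n / m) := by
  classical
  have hm0 : 0 < m := hm
  have hmle : m * (n / m) ≤ n := Nat.mul_div_le n m
  set T : Finset (Fin n) :=
    Finset.univ.filter (fun i : Fin n => (i : ℕ) % m = 0 ∧ (i : ℕ) < m * (n / m)) with hT
  set Φ : List Bool → (Fin n → Bool) := fun u i =>
    if (i : ℕ) < m * (n / m) then
      xor (u.getD (i : ℕ) false) (u.getD (m * ((i : ℕ) / m)) false)
    else u.getD (i : ℕ) false with hΦdef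
  have hcard : C.card ≤
      (Finset.univ.filter (fun f : Fin n → Bool => ∀ i ∈ T, f i = false)).card := by
    apply Finset.card_le_card_of_injOn Φ
    · intro u hu
      simp only [Finset.mem_coe, Finset.mem_filter, Finset.mem_univ, true_and]
      intro i hi
      rw [hT] at hi
      simp only [Finset.mem_filter, Finset.mem_univ, true_and] at hi
      obtain ⟨h0, hlt⟩ := hi
      have : m * ((i : ℕ) / m) = (i : ℕ) :=
        Nat.mul_div_cancel' (Nat.dvd_of_mod_eq_zero h0)
      simp only [hΦdef, if_pos hlt, this, Bool.xor_self]
    · intro u hu v hv hΦuv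
      by_contra huv
      have hu' := hlen u hu
      have hv' := hlen v hv
      have hne : ∃ i : Fin n, u.getD (i : ℕ) false ≠ v.getD (i : ℕ) false := by
        by_contra hcon
        push_neg at hcon
        apply huv
        apply List.ext_getElem (by rw [hu', hv'])
        intro i h1 h2
        have := hcon ⟨i, by omega⟩
        rwa [List.getD_eq_getElem _ _ (by omega), List.getD_eq_getElem _ _ (by omega)] at this
      obtain ⟨i₀, hi₀⟩ := hne
      by_cases hcase : (i₀ : ℕ) < m * (n / m)
      · have hdm : m * ((i₀ : ℕ) / m) + (i₀ : ℕ) % m = (i₀ : ℕ) := Nat.div_add_mod _ _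
        have hmod : (i₀ : ℕ) % m < m := Nat.mod_lt _ hm0
        have hqlt : (i₀ : ℕ) / m < n / m := by
          rw [Nat.div_lt_iff_lt_mul hm0]
          have : (n / m) * m = m * (n / m) := Nat.mul_comm _ _
          omega
        have hsm : m * ((i₀ : ℕ) / m) + m ≤ m * (n / m) := by
          have h1 : m * ((i₀ : ℕ) / m + 1) ≤ m * (n / m) := Nat.mul_le_mul_left m hqlt
          have h2 : m * ((i₀ : ℕ) / m + 1) = m * ((i₀ : ℕ) / m) + m := by ring
          omega
        have hstart : u.getD (m * ((i₀ : ℕ) / m)) false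
            ≠ v.getD (m * ((i₀ : ℕ) / m)) false := by
          intro heq
          have h := congrFun hΦuv i₀
          simp only [hΦdef, if_pos hcase, heq] at h
          apply hi₀
          revert h
          cases u.getD (i₀ : ℕ) false <;> cases v.getD (i₀ : ℕ) false <;>
            cases v.getD (m * ((i₀ : ℕ) / m)) false <;> simp
        have hblock : ∀ k, k < m →
            u.getD (m * ((i₀ : ℕ) / m) + k) false
              ≠ v.getD (m * ((i₀ : ℕ) / m) + k) false := by
          intro k hk
          have hin : m * ((i₀ : ℕ) / m) + k < n := by omega
          have h := congrFun hΦuv ⟨m * ((i₀ : ℕ) / m) + k, hin⟩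
          have hdiv : (m * ((i₀ : ℕ) / m) + k) / m = (i₀ : ℕ) / m := by
            rw [Nat.mul_add_div hm0, Nat.div_eq_of_lt hk]
            omega
          simp only [hΦdef,
            if_pos (show m * ((i₀ : ℕ) / m) + k < m * (n / m) by omega), hdiv] at h
          intro heq
          rw [heq] at h
          apply hstart
          revert h
          cases v.getD (m * ((i₀ : ℕ) / m) + k) false <;>
            cases u.getD (m * ((i₀ : ℕ) / m)) false <;>
            cases v.getD (m * ((i₀ : ℕ) / m)) false <;> simp
        have hdlen : (diffWord u v).length = n := by
          simp [diffWord, hu', hv']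
        have hsn : m * ((i₀ : ℕ) / m) + m ≤ n := by omega
        have hplen : (((diffWord u v).drop (m * ((i₀ : ℕ) / m))).take m).length = m := by
          simp [hdlen]
          omega
        have hpD : (((diffWord u v).drop (m * ((i₀ : ℕ) / m))).take m) ∈ D := by
          rw [hD]
          exact ⟨hplen, my_entries_pm u v n (m * ((i₀ : ℕ) / m)) m hu' hv' hsn hblock⟩
        have hinf := my_take_drop_infix (diffWord u v) (m * ((i₀ : ℕ) / m)) m
        exact hav u hu v hv huv _ hpD hinf
      · have h := congrFun hΦuv i₀
        simp only [hΦdef, if_neg hcase] at h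
        exact hi₀ h
  refine hcard.trans ?_
  rw [my_card_prescribed]
  have hTcard : T.card = n / m := by
    rw [hT, my_card_fin_filter n (fun a => a % m = 0 ∧ a < m * (n / m)),
      my_count_mult m hm (n / m) n hmle]
  rw [hTcard]

/-! ### delta computation -/

lemma my_delta_eq (m : ℕ) (hm : 1 ≤ m) (D : Finset (List ℤ))
    (hD : ∀ p : List ℤ, p ∈ D ↔ (p.length = m ∧ ∀ x ∈ p, x = -1 ∨ x = 1)) (n : ℕ) :
    delta D n = 2 ^ (n - n / m) := by
  obtain ⟨C0, h1, h2, h3⟩ := my_lower_bound m hm D hD n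
  have hmem : 2 ^ (n - n / m) ∈ {k : ℕ | ∃ C : Finset (List Bool),
      (∀ u ∈ C, u.length = n) ∧ AvoidsCode D C ∧ C.card = k} := ⟨C0, h1, h2, h3⟩
  have hub : ∀ k ∈ {k : ℕ | ∃ C : Finset (List Bool),
      (∀ u ∈ C, u.length = n) ∧ AvoidsCode D C ∧ C.card = k}, k ≤ 2 ^ (n - n / m) := by
    rintro k ⟨C, hC1, hC2, rfl⟩
    exact my_upper_bound m hm D hD n C hC1 hC2
  exact le_antisymm (csSup_le ⟨_, hmem⟩ hub) (le_csSup ⟨_, hub⟩ hmem)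

/-! ### Analysis -/

lemma my_key_eq (m n : ℕ) (hm : 1 ≤ m) (hn : 1 ≤ n) :
    ((n - n / m : ℕ) : ℝ) / n = ((m : ℝ) - 1) / m + ((n % m : ℕ) : ℝ) / (m * n) := by
  have h1 : (m : ℝ) * ((n / m : ℕ) : ℝ) + ((n % m : ℕ) : ℝ) = n := by
    exact_mod_cast Nat.div_add_mod n m
  have h2 : ((n - n / m : ℕ) : ℝ) = (n : ℝ) - ((n / m : ℕ) : ℝ) :=
    Nat.cast_sub (Nat.div_le_self n m)
  have hm' : (m : ℝ) ≠ 0 := by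
    have : (0:ℝ) < m := by exact_mod_cast hm
    linarith
  have hn' : (n : ℝ) ≠ 0 := by
    have : (0:ℝ) < n := by exact_mod_cast hn
    linarith
  rw [h2]
  field_simp
  linear_combination (-1:ℝ) * h1

lemma my_tendsto_main (m : ℕ) (hm : 1 ≤ m) :
    Filter.Tendsto (fun n : ℕ => ((n - n / m : ℕ) : ℝ) / n) Filter.atTop
      (nhds (((m : ℝ) - 1) / m)) := by
  have hmpos : (0:ℝ) < m := by exact_mod_cast hm
  apply tendsto_of_tendsto_of_tendsto_of_le_of_le'
    (g := fun _ : ℕ => ((m : ℝ) - 1) / m)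
    (h := fun n : ℕ => ((m : ℝ) - 1) / m + 1 / n)
  · exact tendsto_const_nhds
  · simpa using tendsto_const_nhds.add (tendsto_one_div_atTop_nhds_zero_nat (𝕜 := ℝ))
  · filter_upwards [Filter.eventually_ge_atTop 1] with n hn
    rw [my_key_eq m n hm hn]
    have : (0:ℝ) ≤ ((n % m : ℕ) : ℝ) / (m * n) := by positivity
    linarith
  · filter_upwards [Filter.eventually_ge_atTop 1] with n hn
    rw [my_key_eq m n hm hn]
    have hnpos : (0:ℝ) < n := by exact_mod_cast hn
    have hr : ((n % m : ℕ) : ℝ) ≤ m := by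
      have := Nat.mod_lt n (show 0 < m from hm)
      exact_mod_cast le_of_lt this
    have h3 : ((n % m : ℕ) : ℝ) / (m * n) ≤ (m : ℝ) / (m * n) :=
      (div_le_div_iff_of_pos_right (by positivity)).mpr hr
    have h4 : (m : ℝ) / (m * n) = 1 / n := by
      field_simp
    linarith

/-- the capacity of the set of all length-`m` patterns
over `{-1, +1}` equals `(m - 1) / m`. -/
theorem capacity_full_nonzero_patterns (m : ℕ) (hm : 1 ≤ m) (D : Finset (List ℤ))
    (hD : ∀ p : List ℤ, p ∈ D ↔ (p.length = m ∧ ∀ x ∈ p, x = -1 ∨ x = 1)) :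
    cap D = ((m : ℝ) - 1) / m := by
  have hfun : (fun n : ℕ => Real.logb 2 (delta D n) / n)
      = fun n : ℕ => ((n - n / m : ℕ) : ℝ) / n := by
    funext n
    rw [my_delta_eq m hm D hD n]
    have : ((2 ^ (n - n / m) : ℕ) : ℝ) = (2 : ℝ) ^ (n - n / m) := by push_cast; ring
    rw [this, Real.logb_pow, Real.logb_self_eq_one (by norm_num : (1:ℝ) < 2), mul_one]
  rw [cap, hfun]
  exact (my_tendsto_main m hm).limsup_eq
end

section
/- For every finite set D of forbidden patterns, the sequence ((log₂ δ_n(D))/n)_{n≥1} converges as n → ∞; in particular the capacity cap(D) is well defined as a limit and equals the limsup of this sequence. -/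
namespace CapLimit

def deltaSet (D : Finset (List ℤ)) (n : ℕ) : Set ℕ :=
  {k : ℕ | ∃ C : Finset (List Bool),
    (∀ u ∈ C, u.length = n) ∧ AvoidsCode D C ∧ C.card = k}

lemma mem_deltaSet_le (D : Finset (List ℤ)) (n : ℕ) {k : ℕ} (hk : k ∈ deltaSet D n) :
    k ≤ 2 ^ n := by
  obtain ⟨C, hlen, -, hcard⟩ := hk
  subst hcard
  have : C.card ≤ (Finset.univ : Finset (Fin n → Bool)).card := by
    apply Finset.card_le_card_of_injOn (fun u i => u.getD i.val false)
    · intro u _; exact Finset.mem_univ _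
    · intro u hu v hv h
      apply List.ext_getElem
      · rw [hlen u hu, hlen v hv]
      · intro i h1 h2
        have hi : i < n := by rwa [hlen u hu] at h1
        have := congrFun h ⟨i, hi⟩
        simpa [List.getD_eq_getElem, h1, h2] using this
  simpa using this

lemma bddAbove_deltaSet (D : Finset (List ℤ)) (n : ℕ) : BddAbove (deltaSet D n) :=
  ⟨2 ^ n, fun _ hk => mem_deltaSet_le D n hk⟩

lemma one_mem_deltaSet (D : Finset (List ℤ)) (n : ℕ) : 1 ∈ deltaSet D n := by
  refine ⟨{List.replicate n false}, ?_, ?_, by simp⟩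
  · intro u hu; simp at hu; simp [hu]
  · intro u hu v hv huv
    simp only [Finset.mem_singleton] at hu hv
    exact absurd (hu.trans hv.symm) huv

lemma one_le_delta (D : Finset (List ℤ)) (n : ℕ) : 1 ≤ delta D n :=
  le_csSup (bddAbove_deltaSet D n) (one_mem_deltaSet D n)

lemma delta_mem (D : Finset (List ℤ)) (n : ℕ) : delta D n ∈ deltaSet D n :=
  Nat.sSup_mem ⟨1, one_mem_deltaSet D n⟩ (bddAbove_deltaSet D n)

lemma le_delta (D : Finset (List ℤ)) (n : ℕ) {k : ℕ} (hk : k ∈ deltaSet D n) :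
    k ≤ delta D n :=
  le_csSup (bddAbove_deltaSet D n) hk

lemma diffWord_append {a b c d : List Bool} (h : a.length = c.length) :
    diffWord (a ++ b) (c ++ d) = diffWord a c ++ diffWord b d := by
  unfold diffWord
  exact List.zipWith_append h

/-- Submultiplicativity: `δ_{m+n} ≤ δ_m · δ_n`. -/
lemma delta_submul (D : Finset (List ℤ)) (m n : ℕ) :
    delta D (m + n) ≤ delta D m * delta D n := by
  obtain ⟨C, hlen, havoid, hcard⟩ := delta_mem D (m + n)
  rw [← hcard]
  have htk : ∀ u ∈ C, (u.take m).length = m := by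
    intro u hu; rw [List.length_take, hlen u hu]; omega
  have hdr : ∀ u ∈ C, (u.drop m).length = n := by
    intro u hu; rw [List.length_drop, hlen u hu]; omega
  have hsplit : ∀ u ∈ C, ∀ v ∈ C,
      diffWord u v = diffWord (u.take m) (v.take m) ++ diffWord (u.drop m) (v.drop m) := by
    intro u hu v hv
    conv_lhs => rw [← List.take_append_drop m u, ← List.take_append_drop m v]
    exact diffWord_append (by rw [htk u hu, htk v hv])
  rw [Finset.card_eq_sum_card_image (fun u => u.take m) C]
  -- the image is a code of length m
  have himg : (C.image (fun u => u.take m)).card ≤ delta D m := by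
    apply le_delta
    refine ⟨C.image (fun u => u.take m), ?_, ?_, rfl⟩
    · intro x hx
      obtain ⟨u, hu, rfl⟩ := Finset.mem_image.mp hx
      exact htk u hu
    · intro x hx y hy hxy p hp hinf
      obtain ⟨u, hu, rfl⟩ := Finset.mem_image.mp hx
      obtain ⟨v, hv, rfl⟩ := Finset.mem_image.mp hy
      have huv : u ≠ v := fun h => hxy (by rw [h])
      apply havoid u hu v hv huv p hp
      rw [hsplit u hu v hv]
      exact hinf.trans (List.prefix_append _ _).isInfix
  calc ∑ x ∈ C.image (fun u => u.take m), (C.filter (fun u => u.take m = x)).card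
      ≤ ∑ _x ∈ C.image (fun u => u.take m), delta D n := by
        apply Finset.sum_le_sum
        intro x hx
        -- fiber suffixes form a code of length n
        have hinj : Set.InjOn (fun u : List Bool => u.drop m) ↑(C.filter (fun u => u.take m = x)) := by
          intro u hu v hv h
          simp only [Finset.coe_filter, Set.mem_setOf_eq] at hu hv
          have h' : List.drop m u = List.drop m v := h
          rw [← List.take_append_drop m u, ← List.take_append_drop m v, hu.2, hv.2, h']
        rw [← Finset.card_image_of_injOn hinj]
        apply le_delta
        refine ⟨(C.filter (fun u => u.take m = x)).image (fun u => u.drop m), ?_, ?_, rfl⟩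
        · intro w hw
          obtain ⟨u, hu, rfl⟩ := Finset.mem_image.mp hw
          exact hdr u (Finset.mem_of_mem_filter u hu)
        · intro w hw w' hw' hww' p hp hinf
          obtain ⟨u, hu, rfl⟩ := Finset.mem_image.mp hw
          obtain ⟨v, hv, rfl⟩ := Finset.mem_image.mp hw'
          have hu' := Finset.mem_filter.mp hu
          have hv' := Finset.mem_filter.mp hv
          have huv : u ≠ v := fun h => hww' (by rw [h])
          apply havoid u hu'.1 v hv'.1 huv p hp
          rw [hsplit u hu'.1 v hv'.1]
          exact hinf.trans (List.suffix_append _ _).isInfix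
      _ = (C.image (fun u => u.take m)).card * delta D n := by
        rw [Finset.sum_const, smul_eq_mul]
      _ ≤ delta D m * delta D n := Nat.mul_le_mul_right _ himg

lemma f_subadd (D : Finset (List ℤ)) :
    Subadditive (fun n => Real.logb 2 (delta D n)) := by
  intro m n
  have h1 : (0:ℝ) < (delta D m : ℝ) := by exact_mod_cast one_le_delta D m
  have h2 : (0:ℝ) < (delta D n : ℝ) := by exact_mod_cast one_le_delta D n
  have h3 : (delta D (m+n) : ℝ) ≤ (delta D m : ℝ) * (delta D n : ℝ) := by
    exact_mod_cast delta_submul D m n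
  calc Real.logb 2 (delta D (m+n))
      ≤ Real.logb 2 ((delta D m : ℝ) * (delta D n : ℝ)) := by
        apply Real.logb_le_logb_of_le (by norm_num)
        · exact_mod_cast Nat.lt_of_lt_of_le Nat.zero_lt_one (one_le_delta D (m+n))
        · exact h3
      _ = Real.logb 2 (delta D m) + Real.logb 2 (delta D n) :=
        Real.logb_mul (ne_of_gt h1) (ne_of_gt h2)

lemma f_nonneg (D : Finset (List ℤ)) (n : ℕ) : 0 ≤ Real.logb 2 (delta D n) := by
  apply Real.logb_nonneg (by norm_num)
  exact_mod_cast one_le_delta D n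

end CapLimit

/-- the sequence `(log₂ δ_n(D)) / n` converges, and its limit is
the capacity (defined as the limsup of the same sequence). -/
theorem capacity_is_limit (D : Finset (List ℤ)) (hD : ∀ p ∈ D, IsPattern p) :
    Filter.Tendsto (fun n : ℕ => Real.logb 2 (delta D n) / n)
      Filter.atTop (nhds (cap D)) := by
  have hsub := CapLimit.f_subadd D
  have hbdd : BddBelow (Set.range fun n : ℕ => Real.logb 2 (delta D n) / n) := by
    refine ⟨0, ?_⟩
    rintro x ⟨n, rfl⟩
    exact div_nonneg (CapLimit.f_nonneg D n) (Nat.cast_nonneg n)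
  have htend := hsub.tendsto_lim hbdd
  have hcap : cap D = hsub.lim := htend.limsup_eq
  rw [hcap]
  exact htend
end

section
/- Let D be a nonempty finite set of forbidden patterns and let r, r₁, r₂ be as defined. Then for every n ≥ r₁ + r₂ and every integer l ≥ 1, one has δ_N(D) ≥ ⌈2^{−(r₁+r₂)} · δ_n(D)⌉^l, where N = l·(n − r₁ − r₂ + r + 1). -/
lemma diff_self (x : List Bool) : diffWord x x = List.replicate x.length 0 := by
  induction x with
  | nil => rfl
  | cons a x ih =>
    simp only [diffWord, List.zipWith_cons_cons, List.length_cons, List.replicate_succ]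
    simp only [diffWord] at ih
    rw [ih]
    simp

lemma diff_append {a b a' b' : List Bool} (h : a.length = a'.length) :
    diffWord (a ++ b) (a' ++ b') = diffWord a a' ++ diffWord b b' :=
  List.zipWith_append h

/-- positional split of an infix occurrence across a middle block -/
lemma infix_split {α : Type*} (p A Z B : List α) (h : p <:+: A ++ (Z ++ B)) :
    p <:+: A ++ Z ∨ p <:+: Z ++ B ∨ Z <:+: p := by
  obtain ⟨s, t, hst⟩ := h
  by_cases h1 : s.length + p.length ≤ A.length + Z.length
  · left
    have hp1 : s ++ p <+: A ++ (Z ++ B) := ⟨t, by simpa [List.append_assoc] using hst⟩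
    have hp2 : A ++ Z <+: A ++ (Z ++ B) := ⟨B, by simp⟩
    have := List.prefix_of_prefix_length_le hp1 hp2 (by simpa using h1)
    exact ((List.suffix_append s p).isInfix).trans this.isInfix
  · by_cases h2 : A.length ≤ s.length
    · right; left
      have hs1 : p ++ t <:+ A ++ (Z ++ B) := ⟨s, by simpa [List.append_assoc] using hst⟩
      have hs2 : Z ++ B <:+ A ++ (Z ++ B) := ⟨A, rfl⟩
      have hlen : (p ++ t).length ≤ (Z ++ B).length := by
        have := congrArg List.length hst
        simp only [List.length_append] at this ⊢
        omega
      have := List.suffix_of_suffix_length_le hs1 hs2 hlen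
      exact ((List.prefix_append p t).isInfix).trans this.isInfix
    · right; right
      push_neg at h1 h2
      set d := A.length - s.length with hd
      have hds : s.length + d = A.length := by omega
      have hdp : d ≤ p.length := by omega
      have key : List.drop d p ++ t = Z ++ B := by
        have := congrArg (List.drop A.length) hst
        rw [List.drop_left] at this
        rw [show s ++ p ++ t = s ++ (p ++ t) by simp, List.drop_append,
          List.drop_eq_nil_of_le (le_of_lt h2), List.nil_append,
          List.drop_append,
          Nat.sub_eq_zero_of_le (by omega : A.length - s.length ≤ p.length),
          List.drop_zero] at this
        exact this
      have hZp : Z <+: List.drop d p := by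
        refine List.prefix_of_prefix_length_le ⟨B, rfl⟩ ⟨t, key⟩ ?_
        rw [List.length_drop]; omega
      exact hZp.isInfix.trans (List.drop_suffix d p).isInfix

/-- left zero-padding trim -/
lemma trimL (p : List ℤ) (R : ℕ) (h0 : ∃ x ∈ p, x ≠ 0)
    (hR : ∀ k, List.replicate k (0:ℤ) <+: p → k ≤ R) :
    ∀ a (X : List ℤ), p <:+: List.replicate a 0 ++ X → p <:+: List.replicate R 0 ++ X := by
  intro a
  induction a with
  | zero =>
    intro X h
    simp only [List.replicate_zero, List.nil_append] at h
    exact h.trans (List.suffix_append _ X).isInfix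
  | succ a ih =>
    intro X h
    by_cases hle : a + 1 ≤ R
    · refine h.trans ?_
      have : List.replicate R (0:ℤ) = List.replicate (R - (a+1)) 0 ++ List.replicate (a+1) 0 := by
        rw [← List.replicate_add]; congr 1; omega
      rw [this, List.append_assoc]
      exact (List.suffix_append _ _).isInfix
    · obtain ⟨s, t, hst⟩ := h
      rw [List.replicate_succ, List.cons_append] at hst
      cases s with
      | nil =>
        simp only [List.nil_append] at hst
        have hpre : p <+: List.replicate (a+1) (0:ℤ) ++ X := by
          rw [List.replicate_succ, List.cons_append]; exact ⟨t, hst⟩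
        by_cases hlp : p.length ≤ a + 1
        · have : p <+: List.replicate (a+1) (0:ℤ) :=
            List.prefix_of_prefix_length_le hpre (List.prefix_append _ _) (by simpa using hlp)
          obtain ⟨x, hx, hx0⟩ := h0
          exact absurd (List.eq_of_mem_replicate (this.subset hx)) hx0
        · have : List.replicate (a+1) (0:ℤ) <+: p :=
            List.prefix_of_prefix_length_le (List.prefix_append _ _) hpre (by simp; omega)
          have := hR (a+1) this
          omega
      | cons x s' =>
        simp only [List.cons_append, List.cons.injEq] at hst
        exact ih X ⟨s', t, hst.2⟩

/-- right zero-padding trim -/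
lemma trimR (p : List ℤ) (R : ℕ) (h0 : ∃ x ∈ p, x ≠ 0)
    (hR : ∀ k, List.replicate k (0:ℤ) <:+ p → k ≤ R) :
    ∀ b (X : List ℤ), p <:+: X ++ List.replicate b 0 → p <:+: X ++ List.replicate R 0 := by
  intro b X h
  have h' : p.reverse <:+: List.replicate b 0 ++ X.reverse := by
    rw [← List.reverse_infix, List.reverse_append, List.reverse_replicate] at h
    exact h
  have h0' : ∃ x ∈ p.reverse, x ≠ 0 := by simpa using h0
  have hR' : ∀ k, List.replicate k (0:ℤ) <+: p.reverse → k ≤ R := by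
    intro k hk
    have hk' : (List.replicate k (0:ℤ)).reverse <+: p.reverse := by
      rwa [List.reverse_replicate]
    exact hR k (List.reverse_prefix.mp hk')
  have := trimL p.reverse R h0' hR' b X.reverse h'
  rw [← List.reverse_infix, List.reverse_append, List.reverse_replicate]
  exact this

lemma avoid_key (D : Finset (List ℤ)) (r r₁ r₂ m₀ : ℕ)
    (H0 : ∀ p ∈ D, ∃ x ∈ p, x ≠ 0)
    (h1 : ∀ p ∈ D, ∀ k, List.replicate k (0:ℤ) <+: p → k ≤ r₁)
    (h2 : ∀ p ∈ D, ∀ k, List.replicate k (0:ℤ) <:+ p → k ≤ r₂)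
    (h3 : ∀ p ∈ D, ∀ k, List.replicate k (0:ℤ) <:+: p → k ≤ r)
    (mid : List Bool → List Bool) (S : Set (List Bool))
    (hmid : ∀ c ∈ S, (mid c).length = m₀)
    (HP : ∀ c ∈ S, ∀ c' ∈ S, c ≠ c' → ∀ p ∈ D,
      ¬ p <:+: (List.replicate r₁ 0 ++ (diffWord (mid c) (mid c') ++ List.replicate r₂ 0))) :
    ∀ L₁ L₂ : List (List Bool), L₁.length = L₂.length →
      (∀ c ∈ L₁, c ∈ S) → (∀ c ∈ L₂, c ∈ S) → ∀ p ∈ D,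
      ¬ p <:+: List.replicate (r+1) (0:ℤ) ++
        diffWord ((L₁.map (fun c => mid c ++ List.replicate (r+1) false)).flatten)
                 ((L₂.map (fun c => mid c ++ List.replicate (r+1) false)).flatten) := by
  intro L₁
  induction L₁ with
  | nil =>
    intro L₂ hlen _ _ p hp hinf
    have hL₂ : L₂ = [] := List.eq_nil_of_length_eq_zero (by simpa using hlen.symm)
    subst hL₂
    simp only [List.map_nil, List.flatten_nil] at hinf
    have : diffWord [] [] = [] := rfl
    rw [this, List.append_nil] at hinf
    obtain ⟨x, hx, hx0⟩ := H0 p hp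
    exact hx0 (List.eq_of_mem_replicate (hinf.subset hx))
  | cons c L ih =>
    intro L₂ hlen hm₁ hm₂ p hp hinf
    cases L₂ with
    | nil => simp at hlen
    | cons c' L' =>
      have hcS : c ∈ S := hm₁ c (by simp)
      have hc'S : c' ∈ S := hm₂ c' (by simp)
      have hlen' : L.length = L'.length := by simpa using hlen
      set Z : List ℤ := List.replicate (r+1) (0:ℤ) with hZ
      set sep : List Bool := List.replicate (r+1) false with hsep
      set w₁ := (L.map (fun c => mid c ++ sep)).flatten with hw₁
      set w₂ := (L'.map (fun c => mid c ++ sep)).flatten with hw₂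
      set Δ := diffWord (mid c) (mid c') with hΔ
      have hdsep : diffWord sep sep = Z := by
        rw [hsep, hZ, diff_self, List.length_replicate]
      have hflat : diffWord ((mid c ++ sep) ++ w₁) ((mid c' ++ sep) ++ w₂)
          = (Δ ++ Z) ++ diffWord w₁ w₂ := by
        rw [diff_append (by simp [hmid c hcS, hmid c' hc'S]),
          diff_append ((hmid c hcS).trans (hmid c' hc'S).symm), hdsep]
      rw [List.map_cons, List.flatten_cons, List.map_cons, List.flatten_cons] at hinf
      rw [hflat] at hinf
      have hinf' : p <:+: (Z ++ Δ) ++ (Z ++ diffWord w₁ w₂) := by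
        simpa [List.append_assoc] using hinf
      rcases infix_split p (Z ++ Δ) Z (diffWord w₁ w₂) (by simpa [List.append_assoc] using hinf') with h | h | h
      · -- inside one block
        have hA : p <:+: Z ++ (Δ ++ Z) := by simpa [List.append_assoc] using h
        have hB := trimL p r₁ (H0 p hp) (h1 p hp) (r+1) (Δ ++ Z) hA
        have hC : p <:+: (List.replicate r₁ 0 ++ Δ) ++ Z := by
          simpa [List.append_assoc] using hB
        have hD2 := trimR p r₂ (H0 p hp) (h2 p hp) (r+1) (List.replicate r₁ 0 ++ Δ) hC
        by_cases hcc : c = c'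
        · subst hcc
          rw [hΔ, diff_self] at hD2
          obtain ⟨x, hx, hx0⟩ := H0 p hp
          have := hD2.subset hx
          simp only [List.mem_append, List.mem_replicate] at this
          rcases this with (⟨_, h⟩ | ⟨_, h⟩) | ⟨_, h⟩ <;> exact hx0 h
        · exact HP c hcS c' hc'S hcc p hp (by simpa [List.append_assoc] using hD2)
      · exact ih L' hlen' (fun x hx => hm₁ x (by simp [hx])) (fun x hx => hm₂ x (by simp [hx])) p hp h
      · have := h3 p hp (r+1) h
        omega

def blkCode (f : List Bool → List Bool) (C' : Finset (List Bool)) : ℕ → Finset (List Bool)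
  | 0 => {[]}
  | l+1 => (C' ×ˢ blkCode f C' l).image (fun cw => f cw.1 ++ cw.2)

lemma mem_blkCode {f : List Bool → List Bool} {C' : Finset (List Bool)} :
    ∀ {l : ℕ} {u : List Bool}, u ∈ blkCode f C' l ↔
      ∃ L : List (List Bool), L.length = l ∧ (∀ c ∈ L, c ∈ C') ∧ (L.map f).flatten = u := by
  intro l
  induction l with
  | zero =>
    intro u
    simp only [blkCode, Finset.mem_singleton]
    constructor
    · rintro rfl; exact ⟨[], rfl, by simp, rfl⟩
    · rintro ⟨L, hL, _, rfl⟩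
      rw [List.eq_nil_of_length_eq_zero hL]; rfl
  | succ l ih =>
    intro u
    simp only [blkCode, Finset.mem_image, Finset.mem_product]
    constructor
    · rintro ⟨⟨c, w⟩, ⟨hc, hw⟩, rfl⟩
      obtain ⟨L, hL, hmem, rfl⟩ := ih.mp hw
      exact ⟨c :: L, by simp [hL], by
        intro x hx; rcases List.mem_cons.mp hx with rfl | hx
        · exact hc
        · exact hmem x hx, by simp⟩
    · rintro ⟨L, hL, hmem, rfl⟩
      cases L with
      | nil => simp at hL
      | cons c L' =>
        refine ⟨⟨c, (L'.map f).flatten⟩, ⟨hmem c (by simp), ih.mpr ⟨L', by simpa using hL,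
          fun x hx => hmem x (by simp [hx]), rfl⟩⟩, by simp⟩

lemma length_blkCode {f : List Bool → List Bool} {C' : Finset (List Bool)} {m : ℕ}
    (hf : ∀ c ∈ C', (f c).length = m) :
    ∀ {l : ℕ} {u : List Bool}, u ∈ blkCode f C' l → u.length = l * m := by
  intro l
  induction l with
  | zero => intro u hu; simp only [blkCode, Finset.mem_singleton] at hu; simp [hu]
  | succ l ih =>
    intro u hu
    simp only [blkCode, Finset.mem_image, Finset.mem_product] at hu
    obtain ⟨⟨c, w⟩, ⟨hc, hw⟩, rfl⟩ := hu
    simp only [List.length_append, hf c hc, ih hw]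
    ring

lemma card_blkCode {f : List Bool → List Bool} {C' : Finset (List Bool)} {m : ℕ}
    (hf : ∀ c ∈ C', (f c).length = m)
    (hinj : ∀ c ∈ C', ∀ c' ∈ C', f c = f c' → c = c') :
    ∀ l : ℕ, (blkCode f C' l).card = C'.card ^ l := by
  intro l
  induction l with
  | zero => simp [blkCode]
  | succ l ih =>
    rw [blkCode, Finset.card_image_of_injOn, Finset.card_product, ih, pow_succ]
    · ring
    · rintro ⟨c, w⟩ hcw ⟨c', w'⟩ hcw' h
      simp only [Finset.mem_coe, Finset.mem_product] at hcw hcw'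
      have hlen : (f c).length = (f c').length := by rw [hf c hcw.1, hf c' hcw'.1]
      obtain ⟨h₁, h₂⟩ := List.append_inj h hlen
      exact Prod.ext (hinj c hcw.1 c' hcw'.1 h₁) h₂

lemma card_le_two_pow {N : ℕ} (C : Finset (List Bool)) (h : ∀ u ∈ C, u.length = N) :
    C.card ≤ 2 ^ N := by
  have : C.card ≤ (Finset.univ : Finset (Fin N → Bool)).card := by
    refine Finset.card_le_card_of_injOn (fun u i => u.getD i false)
      (fun _ _ => Finset.mem_univ _) ?_
    intro u hu v hv hfeq
    refine List.ext_getElem (by rw [h u hu, h v hv]) ?_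
    intro i h₁ h₂
    have hi : i < N := by rw [← h u hu]; exact h₁
    have := congrFun hfeq ⟨i, hi⟩
    simpa only [List.getD_eq_getElem u false h₁, List.getD_eq_getElem v false h₂] using this
  simpa [Finset.card_univ, Fintype.card_fun] using this


lemma delta_bddAbove (D : Finset (List ℤ)) (N : ℕ) :
    BddAbove {k : ℕ | ∃ C : Finset (List Bool),
      (∀ u ∈ C, u.length = N) ∧ (∀ u ∈ C, ∀ v ∈ C, u ≠ v → ∀ p ∈ D, ¬ p <:+: diffWord u v) ∧ C.card = k} := by
  refine ⟨2 ^ N, ?_⟩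
  rintro k ⟨C, hlen, _, rfl⟩
  exact card_le_two_pow C hlen

lemma le_delta (D : Finset (List ℤ)) (N : ℕ) (C : Finset (List Bool))
    (h1 : ∀ u ∈ C, u.length = N)
    (h2 : ∀ u ∈ C, ∀ v ∈ C, u ≠ v → ∀ p ∈ D, ¬ p <:+: diffWord u v) :
    C.card ≤ delta D N :=
  le_csSup (delta_bddAbove D N) ⟨C, h1, h2, rfl⟩

lemma delta_exists (D : Finset (List ℤ)) (n : ℕ) :
    ∃ C : Finset (List Bool), (∀ u ∈ C, u.length = n) ∧
      (∀ u ∈ C, ∀ v ∈ C, u ≠ v → ∀ p ∈ D, ¬ p <:+: diffWord u v) ∧ C.card = delta D n := by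
  have h0 : (0:ℕ) ∈ {k : ℕ | ∃ C : Finset (List Bool),
      (∀ u ∈ C, u.length = n) ∧ (∀ u ∈ C, ∀ v ∈ C, u ≠ v → ∀ p ∈ D, ¬ p <:+: diffWord u v) ∧
      C.card = k} := ⟨∅, by simp, by simp, rfl⟩
  exact Nat.sSup_mem ⟨0, h0⟩ (delta_bddAbove D n)


lemma exists_ne_pair {α : Type*} : ∀ (L₁ L₂ : List α), L₁.length = L₂.length → L₁ ≠ L₂ →
    ∃ a ∈ L₁, ∃ b ∈ L₂, a ≠ b := by
  intro L₁
  induction L₁ with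
  | nil => intro L₂ h hne; exact absurd (List.eq_nil_of_length_eq_zero h.symm).symm hne
  | cons a L ih =>
    intro L₂ h hne
    cases L₂ with
    | nil => simp at h
    | cons b L' =>
      by_cases hab : a = b
      · subst hab
        have : L ≠ L' := fun hh => hne (by rw [hh])
        obtain ⟨x, hx, y, hy, hxy⟩ := ih L' (by simpa using h) this
        exact ⟨x, by simp [hx], y, by simp [hy], hxy⟩
      · exact ⟨a, by simp, b, by simp, hab⟩

/-- `δ_N(D) ≥ ⌈2^{-(r₁+r₂)} δ_n(D)⌉^l` where `N = l(n - r₁ - r₂ + r + 1)`. -/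
theorem delta_lower_bound (D : Finset (List ℤ)) (hDne : D.Nonempty)
    (hD : ∀ p ∈ D, IsPattern p) (r r₁ r₂ : ℕ)
    (hr₁ : (∃ p ∈ D, List.replicate r₁ (0:ℤ) <+: p) ∧
      ∀ k : ℕ, (∃ p ∈ D, List.replicate k (0:ℤ) <+: p) → k ≤ r₁)
    (hr₂ : (∃ p ∈ D, List.replicate r₂ (0:ℤ) <:+ p) ∧
      ∀ k : ℕ, (∃ p ∈ D, List.replicate k (0:ℤ) <:+ p) → k ≤ r₂)
    (hr : (∃ p ∈ D, List.replicate r (0:ℤ) <:+: p) ∧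
      ∀ k : ℕ, (∃ p ∈ D, List.replicate k (0:ℤ) <:+: p) → k ≤ r)
    (n : ℕ) (hn : r₁ + r₂ ≤ n) (l : ℕ) (hl : 1 ≤ l) :
    (⌈(delta D n : ℝ) / 2 ^ (r₁ + r₂)⌉₊) ^ l ≤ delta D (l * (n - r₁ - r₂ + r + 1)) := by
  classical
  set M := ⌈(delta D n : ℝ) / 2 ^ (r₁ + r₂)⌉₊ with hM
  set N := l * (n - r₁ - r₂ + r + 1) with hN
  rcases le_or_gt M 1 with hM1 | hM2
  · -- trivial case
    have h1 : M ^ l ≤ 1 := by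
      calc M ^ l ≤ 1 ^ l := Nat.pow_le_pow_left hM1 l
      _ = 1 := one_pow l
    refine h1.trans ?_
    have := le_delta D N {List.replicate N false} (by simp) ?_
    · simpa using this
    · intro u hu v hv huv
      simp only [Finset.mem_singleton] at hu hv
      exact absurd (hu.trans hv.symm) huv
  · -- main construction
    obtain ⟨C, hClen, hCav, hCcard⟩ := delta_exists D n
    set g : List Bool → List Bool × List Bool := fun c => (c.take r₁, c.drop (n - r₂)) with hg
    set T := C.image g with hT
    have hTlen : ∀ t ∈ T, t.1.length = r₁ ∧ t.2.length = r₂ := by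
      rintro t ht
      obtain ⟨c, hc, rfl⟩ := Finset.mem_image.mp ht
      constructor
      · simp [hg, hClen c hc]; omega
      · simp [hg, hClen c hc]; omega
    have hTcard : T.card ≤ 2 ^ (r₁ + r₂) := by
      have hinj : T.card ≤ (T.image (fun t => t.1 ++ t.2)).card := by
        refine Finset.card_le_card_of_injOn _ (fun t ht => Finset.mem_image_of_mem _ ht) ?_
        intro t₁ ht₁ t₂ ht₂ heq
        obtain ⟨h₁, h₂⟩ := List.append_inj heq
          (((hTlen t₁ ht₁).1).trans ((hTlen t₂ ht₂).1).symm)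
        exact Prod.ext h₁ h₂
      refine hinj.trans (card_le_two_pow _ ?_)
      rintro u hu
      obtain ⟨t, ht, rfl⟩ := Finset.mem_image.mp hu
      simp [(hTlen t ht).1, (hTlen t ht).2]
    -- pigeonhole
    have hfiber : ∃ t ∈ T, M ≤ (C.filter (fun c => g c = t)).card := by
      by_contra hcon
      push_neg at hcon
      have hsum : C.card = ∑ t ∈ T, (C.filter (fun c => g c = t)).card :=
        Finset.card_eq_sum_card_fiberwise (fun c hc => Finset.mem_image_of_mem g hc)
      have hle : C.card ≤ T.card * (M - 1) := by
        rw [hsum]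
        calc ∑ t ∈ T, (C.filter (fun c => g c = t)).card ≤ ∑ _t ∈ T, (M - 1) :=
              Finset.sum_le_sum (fun t ht => by have := hcon t ht; omega)
          _ = T.card * (M - 1) := by rw [Finset.sum_const, smul_eq_mul]
      have hle2 : C.card ≤ 2 ^ (r₁ + r₂) * (M - 1) :=
        hle.trans (Nat.mul_le_mul_right _ hTcard)
      have hlt : ((M - 1 : ℕ) : ℝ) < (delta D n : ℝ) / 2 ^ (r₁ + r₂) := by
        refine Nat.lt_ceil.mp ?_
        omega
      have hpow : (0:ℝ) < 2 ^ (r₁ + r₂) := by positivity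
      rw [lt_div_iff₀ hpow] at hlt
      have hlt2 : ((2 ^ (r₁ + r₂) * (M - 1) : ℕ) : ℝ) < (delta D n : ℝ) := by
        push_cast
        linarith
      rw [Nat.cast_lt] at hlt2
      rw [hCcard] at hle2
      exact absurd (hlt2.trans_le hle2) (lt_irrefl _)
    obtain ⟨t, ht, htM⟩ := hfiber
    set C' := C.filter (fun c => g c = t) with hC'
    have hC'sub : ∀ c ∈ C', c ∈ C := fun c hc => (Finset.mem_filter.mp hc).1
    have hC'take : ∀ c ∈ C', c.take r₁ = t.1 := by
      intro c hc
      have := (Finset.mem_filter.mp hc).2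
      exact congrArg Prod.fst this
    have hC'drop : ∀ c ∈ C', c.drop (n - r₂) = t.2 := by
      intro c hc
      have := (Finset.mem_filter.mp hc).2
      exact congrArg Prod.snd this
    have hC'len : ∀ c ∈ C', c.length = n := fun c hc => hClen c (hC'sub c hc)
    set m₀ := n - r₁ - r₂ with hm₀
    set mid : List Bool → List Bool := fun c => (c.drop r₁).take m₀ with hmid
    have hmidlen : ∀ c ∈ C', (mid c).length = m₀ := by
      intro c hc
      simp [hmid, hC'len c hc]
      omega
    have hdecomp : ∀ c ∈ C', c = t.1 ++ (mid c ++ t.2) := by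
      intro c hc
      rw [← hC'take c hc, ← hC'drop c hc]
      conv_lhs => rw [← List.take_append_drop r₁ c]
      congr 1
      conv_lhs => rw [← List.take_append_drop m₀ (c.drop r₁)]
      congr 1
      rw [List.drop_drop]
      congr 1
      omega
    have ht1len : t.1.length = r₁ := (hTlen t ht).1
    have ht2len : t.2.length = r₂ := (hTlen t ht).2
    have hdiffC' : ∀ c ∈ C', ∀ c' ∈ C', diffWord c c' =
        List.replicate r₁ 0 ++ (diffWord (mid c) (mid c') ++ List.replicate r₂ 0) := by
      intro c hc c' hc'
      conv_lhs => rw [hdecomp c hc, hdecomp c' hc']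
      rw [diff_append rfl, diff_append ((hmidlen c hc).trans (hmidlen c' hc').symm)]
      simp only [diff_self, ht1len, ht2len]
    have HP : ∀ c ∈ C', ∀ c' ∈ C', c ≠ c' → ∀ p ∈ D,
        ¬ p <:+: (List.replicate r₁ 0 ++ (diffWord (mid c) (mid c') ++ List.replicate r₂ 0)) := by
      intro c hc c' hc' hne p hp
      rw [← hdiffC' c hc c' hc']
      exact hCav c (hC'sub c hc) c' (hC'sub c' hc') hne p hp
    set f : List Bool → List Bool := fun c => mid c ++ List.replicate (r+1) false with hf
    have hflen : ∀ c ∈ C', (f c).length = m₀ + (r + 1) := by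
      intro c hc; simp [hf, hmidlen c hc]
    have hfinj : ∀ c ∈ C', ∀ c' ∈ C', f c = f c' → c = c' := by
      intro c hc c' hc' heq
      have hmm : mid c = mid c' := by
        have := List.append_inj heq (by rw [hmidlen c hc, hmidlen c' hc'])
        exact this.1
      rw [hdecomp c hc, hdecomp c' hc', hmm]
    set E := blkCode f C' l with hE
    have hElen : ∀ u ∈ E, u.length = N := by
      intro u hu
      rw [length_blkCode hflen hu, hN]
      congr 1
    have hEcard : E.card = C'.card ^ l := card_blkCode hflen hfinj l
    have hEav : ∀ u ∈ E, ∀ v ∈ E, u ≠ v → ∀ p ∈ D, ¬ p <:+: diffWord u v := by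
      intro u hu v hv huv p hp hinf
      obtain ⟨L₁, hL₁len, hL₁mem, hL₁eq⟩ := mem_blkCode.mp hu
      obtain ⟨L₂, hL₂len, hL₂mem, hL₂eq⟩ := mem_blkCode.mp hv
      have hLne : L₁ ≠ L₂ := by
        rintro rfl
        exact huv (hL₁eq.symm.trans hL₂eq)
      obtain ⟨c₀, hc₀, c₀', hc₀', hcc⟩ :=
        exists_ne_pair L₁ L₂ (hL₁len.trans hL₂len.symm) hLne
      have hc₀C := hL₁mem c₀ hc₀
      have hc₀'C := hL₂mem c₀' hc₀'
      have H0 : ∀ q ∈ D, ∃ x ∈ q, x ≠ 0 := by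
        intro q hq
        by_contra hcon
        push_neg at hcon
        have hrepl : q = List.replicate q.length 0 :=
          List.eq_replicate_iff.mpr ⟨rfl, hcon⟩
        have hkr : q.length ≤ r₁ := hr₁.2 q.length ⟨q, hq, by rw [← hrepl]⟩
        have hqin : q <:+: diffWord c₀ c₀' := by
          rw [hdiffC' c₀ hc₀C c₀' hc₀'C]
          have : q <+: List.replicate r₁ (0:ℤ) := by
            rw [hrepl, show r₁ = q.length + (r₁ - q.length) by omega, List.replicate_add]
            exact List.prefix_append _ _
          exact (this.trans (List.prefix_append _ _)).isInfix
        exact hCav c₀ (hC'sub c₀ hc₀C) c₀' (hC'sub c₀' hc₀'C) hcc q hq hqin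
      have hkey := avoid_key D r r₁ r₂ m₀ H0
        (fun p hp k hk => hr₁.2 k ⟨p, hp, hk⟩)
        (fun p hp k hk => hr₂.2 k ⟨p, hp, hk⟩)
        (fun p hp k hk => hr.2 k ⟨p, hp, hk⟩)
        mid {c | c ∈ C'} (fun c hc => hmidlen c hc)
        (fun c hc c' hc' hne p hp => HP c hc c' hc' hne p hp)
        L₁ L₂ (hL₁len.trans hL₂len.symm)
        (fun c hc => hL₁mem c hc) (fun c hc => hL₂mem c hc) p hp
      refine hkey ?_
      rw [hL₁eq, hL₂eq]
      exact hinf.trans (List.suffix_append _ _).isInfix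
    calc M ^ l ≤ C'.card ^ l := Nat.pow_le_pow_left htM l
      _ = E.card := hEcard.symm
      _ ≤ delta D N := le_delta D N E hElen hEav
end

section
/- Let m ≥ 1 and let D = {0^{m−1}+} be the singleton set whose unique pattern consists of m−1 zeros followed by the symbol +1. Then for every n ≥ m−1 one has δ_n(D) = 2^{m−1}. In particular cap(D) = 0. -/
/- ======================= auxiliary material ======================= -/

lemma diffWord_length (u v : List Bool) :
    (diffWord u v).length = min u.length v.length := by
  simp [diffWord]

lemma diffWord_getD (u v : List Bool) (i : ℕ) (hu : i < u.length) (hv : i < v.length) :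
    (diffWord u v).getD i 37 = boolToInt (u[i]'hu) - boolToInt (v[i]'hv) := by
  rw [List.getD_eq_getElem _ _ (by simp [diffWord_length]; omega)]
  simp [diffWord, List.getElem_zipWith]

/-- If a window of `l` of shape `0^M 1` exists, the pattern is an infix. -/
lemma infix_of_window (l : List ℤ) (M k : ℕ) (hk : k + (M + 1) ≤ l.length)
    (h0 : ∀ j, j < M → l.getD (k + j) 37 = 0)
    (h1 : l.getD (k + M) 37 = 1) :
    (List.replicate M (0:ℤ) ++ [1]) <:+: l := by
  have heq : (l.drop k).take (M + 1) = List.replicate M (0:ℤ) ++ [1] := by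
    apply List.ext_getElem
    · simp; omega
    · intro j h₁ h₂
      have hj : j < M + 1 := by simp at h₁; omega
      have hl : k + j < l.length := by omega
      rw [List.getElem_take, List.getElem_drop]
      rcases lt_or_ge j M with hjM | hjM
      · rw [List.getElem_append_left (by simpa using hjM), List.getElem_replicate]
        have := h0 j hjM
        rwa [List.getD_eq_getElem _ _ hl] at this
      · have hjM' : j = M := by omega
        subst hjM'
        rw [List.getElem_append_right (by simp)]
        have := h1
        rw [List.getD_eq_getElem _ _ hl] at this
        simpa using this
  rw [← heq]
  exact ((List.take_prefix _ _).isInfix).trans ((List.drop_suffix _ _).isInfix)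

/-- If the pattern occurs as an infix, there is a position `i ≥ M` with value `1`. -/
lemma exists_one_of_infix (l : List ℤ) (M : ℕ)
    (h : (List.replicate M (0:ℤ) ++ [1]) <:+: l) :
    ∃ i, M ≤ i ∧ i < l.length ∧ l.getD i 37 = 1 := by
  obtain ⟨s, t, hst⟩ := h
  refine ⟨s.length + M, by omega, ?_, ?_⟩
  · have := congrArg List.length hst
    simp at this
    omega
  · have key : (s ++ (List.replicate M (0:ℤ) ++ [1]) ++ t).getD (s.length + M) 37 = 1 := by
      rw [List.getD_eq_getElem _ _ (by simp)]
      rw [List.getElem_append_left (by simp)]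
      rw [List.getElem_append_right (by simp)]
      simp
    rw [← hst]
    exact key

/-- The canonical maximal code: arbitrary first `M` bits, zeros afterwards. -/
noncomputable def goodCode (M n : ℕ) : Finset (List Bool) :=
  (Finset.univ : Finset (Fin M → Bool)).image
    (fun f => List.ofFn f ++ List.replicate (n - M) false)

lemma goodCode_card (M n : ℕ) : (goodCode M n).card = 2 ^ M := by
  rw [goodCode, Finset.card_image_of_injective _ (fun f g h => by
    exact List.ofFn_injective (List.append_cancel_right h))]
  simp

lemma goodCode_len (M n : ℕ) (hn : M ≤ n) : ∀ u ∈ goodCode M n, u.length = n := by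
  intro u hu
  simp only [goodCode, Finset.mem_image] at hu
  obtain ⟨f, -, rfl⟩ := hu
  simp; omega

lemma goodCode_avoids (M n : ℕ) (hn : M ≤ n) :
    AvoidsCode {List.replicate M (0:ℤ) ++ [1]} (goodCode M n) := by
  intro u hu v hv huv p hp hinf
  simp only [Finset.mem_singleton] at hp
  subst hp
  simp only [goodCode, Finset.mem_image] at hu hv
  obtain ⟨f, -, rfl⟩ := hu
  obtain ⟨g, -, rfl⟩ := hv
  have hdiff : diffWord (List.ofFn f ++ List.replicate (n - M) false)
      (List.ofFn g ++ List.replicate (n - M) false)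
      = List.zipWith (fun a b => boolToInt a - boolToInt b) (List.ofFn f) (List.ofFn g)
        ++ List.replicate (n - M) 0 := by
    rw [diffWord, List.zipWith_append (by simp)]
    congr 1
    rw [List.zipWith_replicate]
    simp [boolToInt]
  rw [hdiff] at hinf
  obtain ⟨i, hiM, hilen, hione⟩ := exists_one_of_infix _ _ hinf
  have hA : (List.zipWith (fun a b => boolToInt a - boolToInt b)
      (List.ofFn f) (List.ofFn g)).length = M := by simp
  rw [List.getD_eq_getElem _ _ hilen] at hione
  rw [List.getElem_append_right (by omega)] at hione
  simp at hione

lemma code_card_le (M n : ℕ) (hn : M ≤ n) (C : Finset (List Bool))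
    (hlen : ∀ u ∈ C, u.length = n)
    (hav : AvoidsCode {List.replicate M (0:ℤ) ++ [1]} C) :
    C.card ≤ 2 ^ M := by
  by_contra hcard
  push_neg at hcard
  obtain ⟨u, hu, v, hv, huv, hfe⟩ :=
    Finset.exists_ne_map_eq_of_card_lt_of_maps_to
      (t := (Finset.univ : Finset (Fin M → Bool)))
      (by
        have hcu : (Finset.univ : Finset (Fin M → Bool)).card = 2 ^ M := by
          simp [Finset.card_univ]
        rw [hcu]; exact hcard)
      (f := fun (w : List Bool) (i : Fin M) => List.getD w i.val false)
      (fun a _ => Finset.mem_univ _)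
  have hul : u.length = n := hlen u hu
  have hvl : v.length = n := hlen v hv
  have hagree : ∀ j, j < M → u.getD j false = v.getD j false := by
    intro j hj
    exact congrFun hfe ⟨j, hj⟩
  have hex : ∃ i, u.getD i false ≠ v.getD i false := by
    by_contra hall
    push_neg at hall
    apply huv
    apply List.ext_getElem (by omega)
    intro i h₁ h₂
    have := hall i
    rwa [List.getD_eq_getElem _ _ h₁, List.getD_eq_getElem _ _ h₂] at this
  classical
  set i := Nat.find hex with hi_def
  have hi : u.getD i false ≠ v.getD i false := Nat.find_spec hex
  have hmin : ∀ j, j < i → u.getD j false = v.getD j false := by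
    intro j hj
    by_contra hne
    exact absurd hne (by simpa using Nat.find_min hex hj)
  have hiM : M ≤ i := by
    by_contra h
    exact hi (hagree i (by omega))
  have hin : i < n := by
    by_contra h
    push_neg at h
    apply hi
    rw [List.getD_eq_default _ _ (by omega), List.getD_eq_default _ _ (by omega)]
  -- entries at i differ
  have hiu : i < u.length := by omega
  have hiv : i < v.length := by omega
  have hbne : u[i]'hiu ≠ v[i]'hiv := by
    intro h
    apply hi
    rw [List.getD_eq_getElem _ _ hiu, List.getD_eq_getElem _ _ hiv, h]
  have hlen_d : ∀ w₁ w₂ : List Bool, w₁.length = n → w₂.length = n →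
      (diffWord w₁ w₂).length = n := by
    intro w₁ w₂ h1 h2; rw [diffWord_length, h1, h2, min_self]
  have hzero : ∀ j, (i - M) + j < i →
      ∀ w₁ w₂ : List Bool, w₁ = u ∧ w₂ = v ∨ w₁ = v ∧ w₂ = u →
      (diffWord w₁ w₂).getD ((i - M) + j) 37 = 0 := by
    intro j hj w₁ w₂ hw
    have hlt : (i - M) + j < n := by omega
    have h1 : w₁.length = n := by rcases hw with ⟨rfl, rfl⟩ | ⟨rfl, rfl⟩ <;> omega
    have h2 : w₂.length = n := by rcases hw with ⟨rfl, rfl⟩ | ⟨rfl, rfl⟩ <;> omega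
    rw [diffWord_getD _ _ _ (by omega) (by omega)]
    have heqj := hmin _ hj
    rw [List.getD_eq_getElem _ _ (show (i-M)+j < u.length by omega),
        List.getD_eq_getElem _ _ (show (i-M)+j < v.length by omega)] at heqj
    rcases hw with ⟨rfl, rfl⟩ | ⟨rfl, rfl⟩ <;> simp [heqj]
  -- the key: one of diffWord u v, diffWord v u has a 1 at position i
  have hone : (diffWord u v).getD i 37 = 1 ∨ (diffWord v u).getD i 37 = 1 := by
    rw [diffWord_getD _ _ _ hiu hiv, diffWord_getD _ _ _ hiv hiu]
    cases hb1 : u[i]'hiu <;> cases hb2 : v[i]'hiv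
    · exact absurd (hb1.trans hb2.symm) hbne
    · right; norm_num [boolToInt]
    · left; norm_num [boolToInt]
    · exact absurd (hb1.trans hb2.symm) hbne
  have happ : ∀ w₁ w₂ : List Bool, w₁ ∈ C → w₂ ∈ C → w₁ ≠ w₂ →
      w₁.length = n → w₂.length = n →
      (∀ j, j < M → (diffWord w₁ w₂).getD ((i - M) + j) 37 = 0) →
      (diffWord w₁ w₂).getD ((i - M) + M) 37 = 1 → False := by
    intro w₁ w₂ h1 h2 hne hl1 hl2 hz ho
    exact hav w₁ h1 w₂ h2 hne _ (Finset.mem_singleton_self _)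
      (infix_of_window _ M (i - M)
        (by rw [hlen_d _ _ hl1 hl2]; omega) hz ho)
  have hiMM : i - M + M = i := by omega
  rcases hone with hone | hone
  · exact happ u v hu hv huv hul hvl
      (fun j hj => hzero j (by omega) u v (Or.inl ⟨rfl, rfl⟩))
      (by rw [hiMM]; exact hone)
  · exact happ v u hv hu huv.symm hvl hul
      (fun j hj => hzero j (by omega) v u (Or.inr ⟨rfl, rfl⟩))
      (by rw [hiMM]; exact hone)

lemma delta_eq (M n : ℕ) (hn : M ≤ n) :
    delta {List.replicate M (0:ℤ) ++ [1]} n = 2 ^ M := by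
  have hmem : 2 ^ M ∈ {k : ℕ | ∃ C : Finset (List Bool),
      (∀ u ∈ C, u.length = n) ∧ AvoidsCode {List.replicate M (0:ℤ) ++ [1]} C ∧ C.card = k} :=
    ⟨goodCode M n, goodCode_len M n hn, goodCode_avoids M n hn, goodCode_card M n⟩
  have hub : ∀ k ∈ {k : ℕ | ∃ C : Finset (List Bool),
      (∀ u ∈ C, u.length = n) ∧ AvoidsCode {List.replicate M (0:ℤ) ++ [1]} C ∧ C.card = k},
      k ≤ 2 ^ M := by
    rintro k ⟨C, hl, ha, rfl⟩
    exact code_card_le M n hn C hl ha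
  exact le_antisymm (csSup_le ⟨_, hmem⟩ hub) (le_csSup ⟨2 ^ M, hub⟩ hmem)

/-- for the single forbidden pattern `0^{m-1}+`, for every `n ≥ m-1` one
has `δ_n(D) = 2^{m-1}`; in particular `cap(D) = 0`. -/
theorem delta_zeros_plus (m : ℕ) (hm : 1 ≤ m) (D : Finset (List ℤ))
    (hD : D = {List.replicate (m - 1) (0:ℤ) ++ [1]}) :
    (∀ n : ℕ, m - 1 ≤ n → delta D n = 2 ^ (m - 1)) ∧ cap D = 0 := by
  subst hD
  set M := m - 1 with hM
  have hdelta : ∀ n : ℕ, M ≤ n → delta {List.replicate M (0:ℤ) ++ [1]} n = 2 ^ M :=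
    fun n hn => delta_eq M n hn
  refine ⟨hdelta, ?_⟩
  rw [cap]
  have htend : Filter.Tendsto
      (fun n : ℕ => Real.logb 2 (delta {List.replicate M (0:ℤ) ++ [1]} n) / n)
      Filter.atTop (nhds 0) := by
    apply (tendsto_const_div_atTop_nhds_zero_nat (M : ℝ)).congr'
    filter_upwards [Filter.eventually_ge_atTop M] with n hn
    rw [hdelta n hn]
    congr 1
    push_cast
    rw [Real.logb_pow, Real.logb_self_eq_one (by norm_num)]
    ring
  exact htend.limsup_eq
end
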